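/- Let γ*: S¹ → S² be the constant-speed parametrization of the 2-fold covered great circle, i.e. γ*(e^{iθ}) = (cos 2θ, sin 2θ, 0). Then the loop s ↦ Θ(γ*'(s)/|γ*'(s)|) in SO(3) represents the trivial element of π₁(SO(3)) ≅ ℤ/2, whereas for the single loop E(e^{iθ}) = (cos θ, sin θ, 0) the corresponding loop in SO(3) represents the nontrivial element. -/

import Mathlib

open Real
open scoped RealInnerProductSpace

/-- Euclidean `ℝ³`. -/
abbrev E3 := EuclideanSpace ℝ (Fin 3)

/-- The unit tangent bundle `T¹S²` of the round `2`-sphere. -/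
def unitTangentS2 : Set (E3 × E3) :=
  {p | ‖p.1‖ = 1 ∧ ‖p.2‖ = 1 ∧ ⟪p.1, p.2⟫ = 0}

/-- The special orthogonal group `SO(3)` of real `3×3` matrices. -/
abbrev SO3 := Matrix.specialOrthogonalGroup (Fin 3) ℝ

/-- The unit tangent lift `s ↦ (γ(s), γ'(s)/|γ'(s)|)` of a regular curve. -/
noncomputable def tangentLift (γ : ℝ → E3) (s : ℝ) : E3 × E3 :=
  (γ s, ‖deriv γ s‖⁻¹ • deriv γ s)

/-- The constant-speed parametrization of the doubly covered equator. -/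
noncomputable def doubleLoop (θ : ℝ) : E3 :=
  (WithLp.equiv 2 (Fin 3 → ℝ)).symm ![Real.cos (2 * θ), Real.sin (2 * θ), 0]

/-- The standard parametrization of the simply covered equator. -/
noncomputable def singleLoop (θ : ℝ) : E3 :=
  (WithLp.equiv 2 (Fin 3 → ℝ)).symm ![Real.cos θ, Real.sin θ, 0]

noncomputable section Aux

namespace SO3Aux

def mkE3 (a b c : ℝ) : E3 := (WithLp.equiv 2 (Fin 3 → ℝ)).symm ![a, b, c]

@[simp] lemma mkE3_0 (a b c : ℝ) : mkE3 a b c 0 = a := rfl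
@[simp] lemma mkE3_1 (a b c : ℝ) : mkE3 a b c 1 = b := rfl
@[simp] lemma mkE3_2 (a b c : ℝ) : mkE3 a b c 2 = c := rfl

lemma E3_ext {x y : E3} (h0 : x 0 = y 0) (h1 : x 1 = y 1) (h2 : x 2 = y 2) : x = y := by
  apply (WithLp.equiv 2 (Fin 3 → ℝ)).injective; funext i; fin_cases i <;> assumption

lemma inner_eq (x y : E3) : ⟪x, y⟫ = x 0 * y 0 + x 1 * y 1 + x 2 * y 2 := by
  simp [PiLp.inner_apply, Fin.sum_univ_three]
  ring

lemma normsq_eq (x : E3) : ‖x‖ ^ 2 = x 0 ^ 2 + x 1 ^ 2 + x 2 ^ 2 := by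
  rw [EuclideanSpace.norm_eq, Real.sq_sqrt (by positivity), Fin.sum_univ_three]
  simp [Real.norm_eq_abs, sq_abs]

lemma norm_eq_one_iff {x : E3} : ‖x‖ = 1 ↔ x 0 ^ 2 + x 1 ^ 2 + x 2 ^ 2 = 1 := by
  rw [← normsq_eq]
  constructor
  · intro h; rw [h]; norm_num
  · intro h; nlinarith [norm_nonneg x]

lemma mem_uts_iff {m : E3 × E3} : m ∈ unitTangentS2 ↔
    m.1 0 ^2 + m.1 1 ^2 + m.1 2 ^2 = 1 ∧ m.2 0 ^2 + m.2 1 ^2 + m.2 2 ^2 = 1 ∧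
    m.1 0 * m.2 0 + m.1 1 * m.2 1 + m.1 2 * m.2 2 = 0 := by
  unfold unitTangentS2
  rw [Set.mem_setOf_eq, norm_eq_one_iff, norm_eq_one_iff, inner_eq]

lemma continuous_mkE3 {X : Type*} [TopologicalSpace X] {f g h : X → ℝ}
    (hf : Continuous f) (hg : Continuous g) (hh : Continuous h) :
    Continuous fun p => mkE3 (f p) (g p) (h p) := by
  have : (fun p => mkE3 (f p) (g p) (h p)) =
      (PiLp.continuousLinearEquiv 2 ℝ (fun _ : Fin 3 => ℝ)).symm ∘
        (fun p => (![f p, g p, h p] : Fin 3 → ℝ)) := rfl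
  rw [this]
  refine ((PiLp.continuousLinearEquiv 2 ℝ _).symm.continuous).comp ?_
  refine continuous_pi fun i => ?_
  fin_cases i <;> simpa

/-! ### The contracting homotopy for the double loop -/

def Hx (t s : ℝ) : E3 :=
  mkE3 ((cos (π*t/2) * cos s)^2 + (sin (π*t/2))^2 - (cos (π*t/2) * sin s)^2)
    (2 * (cos (π*t/2) * cos s) * (cos (π*t/2) * sin s))
    (2 * (sin (π*t/2)) * (cos (π*t/2) * sin s))

def Hv (t s : ℝ) : E3 :=
  mkE3 (-(2 * (cos (π*t/2) * cos s) * (cos (π*t/2) * sin s)))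
    ((cos (π*t/2) * cos s)^2 - (sin (π*t/2))^2 - (cos (π*t/2) * sin s)^2)
    (2 * (cos (π*t/2) * cos s) * (sin (π*t/2)))

lemma H_mem (t s : ℝ) : (Hx t s, Hv t s) ∈ unitTangentS2 := by
  rw [mem_uts_iff]
  have h1 : (cos (π*t/2) * cos s)^2 + (sin (π*t/2))^2 + (cos (π*t/2) * sin s)^2 = 1 := by
    linear_combination (cos (π*t/2))^2 * sin_sq_add_cos_sq s + sin_sq_add_cos_sq (π*t/2)
  refine ⟨?_, ?_, ?_⟩
  · simp only [Hx, mkE3_0, mkE3_1, mkE3_2]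
    linear_combination ((cos (π*t/2) * cos s)^2 + (sin (π*t/2))^2 + (cos (π*t/2) * sin s)^2 + 1) * h1
  · simp only [Hv, mkE3_0, mkE3_1, mkE3_2]
    linear_combination ((cos (π*t/2) * cos s)^2 + (sin (π*t/2))^2 + (cos (π*t/2) * sin s)^2 + 1) * h1
  · simp only [Hx, Hv, mkE3_0, mkE3_1, mkE3_2]
    ring

lemma H_continuous : Continuous (fun p : ℝ × ℝ => (Hx p.1 p.2, Hv p.1 p.2)) := by
  have hc1 : Continuous fun p : ℝ × ℝ => cos (π*p.1/2) * cos p.2 :=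
    ((Real.continuous_cos.comp (by fun_prop)).mul (Real.continuous_cos.comp continuous_snd))
  have hc2 : Continuous fun p : ℝ × ℝ => sin (π*p.1/2) :=
    Real.continuous_sin.comp (by fun_prop)
  have hc3 : Continuous fun p : ℝ × ℝ => cos (π*p.1/2) * sin p.2 :=
    ((Real.continuous_cos.comp (by fun_prop)).mul (Real.continuous_sin.comp continuous_snd))
  exact (continuous_mkE3 (by fun_prop) (by fun_prop) (by fun_prop)).prodMk
    (continuous_mkE3 (by fun_prop) (by fun_prop) (by fun_prop))

lemma H_periodic (t s : ℝ) : (Hx t (s + 2*π), Hv t (s + 2*π)) = (Hx t s, Hv t s) := by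
  have hc : cos (s + 2*π) = cos s := Real.cos_periodic s
  have hs : sin (s + 2*π) = sin s := Real.sin_periodic s
  simp only [Hx, Hv, hc, hs]

lemma deriv_doubleLoop (s : ℝ) :
    deriv doubleLoop s = mkE3 (-2 * Real.sin (2*s)) (2 * Real.cos (2*s)) 0 := by
  refine HasDerivAt.deriv ?_
  have hg : HasDerivAt (fun θ => (![Real.cos (2*θ), Real.sin (2*θ), 0] : Fin 3 → ℝ))
      (![(-2) * Real.sin (2*s), 2 * Real.cos (2*s), 0]) s := by
    rw [hasDerivAt_pi]
    intro i
    fin_cases i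
    · simpa [Function.comp_def] using ((Real.hasDerivAt_cos (2*s)).comp s
        (by simpa using (hasDerivAt_id s).const_mul 2)).congr_deriv (by ring)
    · simpa [Function.comp_def] using ((Real.hasDerivAt_sin (2*s)).comp s
        (by simpa using (hasDerivAt_id s).const_mul 2)).congr_deriv (by ring)
    · simpa using (hasDerivAt_const s (0:ℝ))
  exact ((PiLp.continuousLinearEquiv 2 ℝ (fun _ : Fin 3 => ℝ)).symm.toContinuousLinearMap.hasFDerivAt.comp_hasDerivAt s hg :)

lemma tangentLift_double (s : ℝ) :
    tangentLift doubleLoop s = (mkE3 (cos (2*s)) (sin (2*s)) 0, mkE3 (-sin (2*s)) (cos (2*s)) 0) := by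
  have hd := deriv_doubleLoop s
  have hn : ‖deriv doubleLoop s‖ = 2 := by
    rw [hd]
    have : ‖mkE3 (-2 * Real.sin (2*s)) (2 * Real.cos (2*s)) 0‖^2 = 4 := by
      rw [normsq_eq]; simp only [mkE3_0, mkE3_1, mkE3_2]
      nlinarith [sin_sq_add_cos_sq (2*s)]
    nlinarith [norm_nonneg (mkE3 (-2 * Real.sin (2*s)) (2 * Real.cos (2*s)) 0)]
  unfold tangentLift
  rw [hn, hd]
  refine Prod.ext rfl ?_
  apply E3_ext <;> simp [PiLp.smul_apply, smul_eq_mul] <;> ring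

lemma H_zero (s : ℝ) : (Hx 0 s, Hv 0 s) = tangentLift doubleLoop s := by
  have c2 : cos (2*s) = cos s^2 - sin s^2 := by
    rw [Real.cos_two_mul]; linear_combination Real.sin_sq_add_cos_sq s
  rw [tangentLift_double, c2, Real.sin_two_mul]
  have h0 : π * 0 / 2 = 0 := by ring
  refine Prod.ext ?_ ?_ <;> apply E3_ext <;>
    simp only [Hx, Hv, h0, Real.cos_zero, Real.sin_zero, mkE3_0, mkE3_1, mkE3_2] <;>
    first | rfl | ring

lemma H_one (s : ℝ) : (Hx 1 s, Hv 1 s) = (mkE3 1 0 0, mkE3 0 (-1) 0) := by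
  have h0 : π * 1 / 2 = π/2 := by ring
  refine Prod.ext ?_ ?_ <;> apply E3_ext <;>
    simp [Hx, Hv, h0, Real.cos_pi_div_two, Real.sin_pi_div_two]


/-! ### Quaternions and the double cover of `T¹S²` -/

open Quaternion in
def mkQ (a b c d : ℝ) : ℍ := ⟨a, b, c, d⟩

open Quaternion

@[simp] lemma mkQ_re (a b c d : ℝ) : (mkQ a b c d).re = a := rfl
@[simp] lemma mkQ_imI (a b c d : ℝ) : (mkQ a b c d).imI = b := rfl
@[simp] lemma mkQ_imJ (a b c d : ℝ) : (mkQ a b c d).imJ = c := rfl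
@[simp] lemma mkQ_imK (a b c d : ℝ) : (mkQ a b c d).imK = d := rfl

lemma Q_ext {p q : ℍ} (h0 : p.re = q.re) (h1 : p.imI = q.imI) (h2 : p.imJ = q.imJ)
    (h3 : p.imK = q.imK) : p = q := by
  rcases p with ⟨p0,p1,p2,p3⟩; rcases q with ⟨q0,q1,q2,q3⟩
  subst h0 h1 h2 h3; rfl

def toQ (x : E3) : ℍ := mkQ 0 (x 0) (x 1) (x 2)
def fromQ (q : ℍ) : E3 := mkE3 q.imI q.imJ q.imK
def rotVec (q : ℍ) (y : E3) : E3 := fromQ (q * toQ y * star q)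
def qe1 : E3 := mkE3 1 0 0
def qe2 : E3 := mkE3 0 1 0
def Pmap (u : ℍ) : E3 × E3 := (rotVec u qe1, rotVec u qe2)

lemma normSq_eq_one {u : ℍ} (h : ‖u‖ = 1) :
    u.re^2 + u.imI^2 + u.imJ^2 + u.imK^2 = 1 := by
  have : normSq u = 1 := by rw [normSq_eq_norm_mul_self, h]; norm_num
  rw [normSq_def'] at this; linarith

lemma norm_eq_one_of_normSq {u : ℍ} (h : u.re^2 + u.imI^2 + u.imJ^2 + u.imK^2 = 1) :
    ‖u‖ = 1 := by
  have h2 : normSq u = 1 := by rw [normSq_def']; linarith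
  have := normSq_eq_norm_mul_self u
  nlinarith [norm_nonneg u]

lemma rotVec_coord (q : ℍ) (y : E3) :
    rotVec q y = mkE3
      ((q.re^2 + q.imI^2 - q.imJ^2 - q.imK^2) * y 0 + 2*(q.imI*q.imJ - q.re*q.imK) * y 1 + 2*(q.imI*q.imK + q.re*q.imJ) * y 2)
      (2*(q.imI*q.imJ + q.re*q.imK) * y 0 + (q.re^2 - q.imI^2 + q.imJ^2 - q.imK^2) * y 1 + 2*(q.imJ*q.imK - q.re*q.imI) * y 2)
      (2*(q.imI*q.imK - q.re*q.imJ) * y 0 + 2*(q.imJ*q.imK + q.re*q.imI) * y 1 + (q.re^2 - q.imI^2 - q.imJ^2 + q.imK^2) * y 2) := by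
  apply E3_ext <;>
    simp only [rotVec, fromQ, toQ, mkQ_re, mkQ_imI, mkQ_imJ, mkQ_imK, Quaternion.imI_mul, Quaternion.imJ_mul,
      Quaternion.imK_mul, Quaternion.re_mul, Quaternion.re_star, Quaternion.imI_star,
      Quaternion.imJ_star, Quaternion.imK_star, mkE3_0, mkE3_1, mkE3_2] <;> ring

lemma rotVec_mul (q r : ℍ) (y : E3) :
    rotVec (q * r) y = rotVec q (rotVec r y) := by
  rw [rotVec_coord r y, rotVec_coord (q*r) y, rotVec_coord q _]
  apply E3_ext <;>
    simp only [Quaternion.re_mul, Quaternion.imI_mul, Quaternion.imJ_mul, Quaternion.imK_mul,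
      mkE3_0, mkE3_1, mkE3_2] <;> ring

lemma rotVec_neg (q : ℍ) (y : E3) : rotVec (-q) y = rotVec q y := by
  rw [rotVec_coord, rotVec_coord]
  simp only [Quaternion.re_neg, Quaternion.imI_neg, Quaternion.imJ_neg, Quaternion.imK_neg]
  ring_nf

lemma rotVec_one (y : E3) : rotVec 1 y = y := by
  rw [rotVec_coord]
  apply E3_ext <;> simp [Quaternion.re_one (R := ℝ)]

lemma rotVec_smul (r : ℝ) (q : ℍ) (y : E3) :
    rotVec (r • q) y = (r^2) • rotVec q y := by
  rw [rotVec_coord, rotVec_coord]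
  apply E3_ext <;>
    simp only [Quaternion.re_smul, Quaternion.imI_smul, Quaternion.imJ_smul, Quaternion.imK_smul,
      smul_eq_mul, PiLp.smul_apply, mkE3_0, mkE3_1, mkE3_2] <;> ring

lemma Pmap_neg (u : ℍ) : Pmap (-u) = Pmap u := by
  unfold Pmap; rw [rotVec_neg, rotVec_neg]

lemma Pmap_mem {u : ℍ} (hu : ‖u‖ = 1) : Pmap u ∈ unitTangentS2 := by
  have h := normSq_eq_one hu
  rw [mem_uts_iff]
  unfold Pmap
  rw [rotVec_coord, rotVec_coord]
  refine ⟨?_, ?_, ?_⟩ <;>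
    simp only [mkE3_0, mkE3_1, mkE3_2, qe1, qe2]
  · linear_combination (u.re^2 + u.imI^2 + u.imJ^2 + u.imK^2 + 1) * h
  · linear_combination (u.re^2 + u.imI^2 + u.imJ^2 + u.imK^2 + 1) * h
  · ring

lemma rotVec_cancel {u : ℍ} (hu : ‖u‖ = 1) (u' : ℍ) (y : E3) :
    rotVec (u' * star u) (rotVec u y) = rotVec u' y := by
  have h1 : normSq u = 1 := by rw [normSq_eq_norm_mul_self, hu]; norm_num
  rw [← rotVec_mul, mul_assoc, star_mul_self, h1]
  norm_num


/-! ### The local square-root `rho` -/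

def crossE3 (x y : E3) : E3 :=
  mkE3 (x 1 * y 2 - x 2 * y 1) (x 2 * y 0 - x 0 * y 2) (x 0 * y 1 - x 1 * y 0)

def Tf (m m' : E3 × E3) : ℝ :=
  ⟪m.1, m'.1⟫ + ⟪m.2, m'.2⟫ + ⟪crossE3 m.1 m.2, crossE3 m'.1 m'.2⟫

def Af (m m' : E3 × E3) : E3 :=
  crossE3 m.1 m'.1 + crossE3 m.2 m'.2 + crossE3 (crossE3 m.1 m.2) (crossE3 m'.1 m'.2)

def rho (m m' : E3 × E3) : ℍ :=
  (2 * Real.sqrt (1 + Tf m m'))⁻¹ •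
    mkQ (1 + Tf m m') (Af m m' 0) (Af m m' 1) (Af m m' 2)

lemma Tf_eq (m m' : E3 × E3) : Tf m m' =
    m.1 0 * m'.1 0 + m.1 1 * m'.1 1 + m.1 2 * m'.1 2 +
    (m.2 0 * m'.2 0 + m.2 1 * m'.2 1 + m.2 2 * m'.2 2) +
    ((m.1 1 * m.2 2 - m.1 2 * m.2 1) * (m'.1 1 * m'.2 2 - m'.1 2 * m'.2 1) +
     (m.1 2 * m.2 0 - m.1 0 * m.2 2) * (m'.1 2 * m'.2 0 - m'.1 0 * m'.2 2) +
     (m.1 0 * m.2 1 - m.1 1 * m.2 0) * (m'.1 0 * m'.2 1 - m'.1 1 * m'.2 0)) := by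
  simp [Tf, inner_eq, crossE3, Fin.sum_univ_three]

lemma key_T {u u' : ℍ} (huu : ‖u‖ = 1) (huu' : ‖u'‖ = 1) :
    1 + Tf (Pmap u) (Pmap u') = 4 * ((u' * star u).re)^2 := by
  have hu := normSq_eq_one huu
  have hu' := normSq_eq_one huu'
  rw [Tf_eq]
  unfold Pmap
  rw [rotVec_coord, rotVec_coord, rotVec_coord, rotVec_coord]
  simp only [mkE3_0, mkE3_1, mkE3_2, qe1, qe2, Quaternion.re_mul, Quaternion.re_star,
    Quaternion.imI_star, Quaternion.imJ_star, Quaternion.imK_star]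
  linear_combination ((-2 : ℝ)*u'.imK^2 + u'.imK^4 + (-1 : ℝ)*u'.imJ^4 + (-2 : ℝ)*u'.imI^2*u'.imJ^2 + (-1 : ℝ)*u'.imI^4 + (-2 : ℝ)*u'.re^2 + (2 : ℝ)*u'.re^2*u'.imK^2 + u'.re^4 + u.imK^2*u'.imK^4 + (-1 : ℝ)*u.imK^2*u'.imJ^4 + (-2 : ℝ)*u.imK^2*u'.imI^2*u'.imJ^2 + (-1 : ℝ)*u.imK^2*u'.imI^4 + (2 : ℝ)*u.imK^2*u'.re^2*u'.imK^2 + u.imK^2*u'.re^4 + (4 : ℝ)*u.imJ*u.imK*u'.imJ*u'.imK^3 + (4 : ℝ)*u.imJ*u.imK*u'.imJ^3*u'.imK + (4 : ℝ)*u.imJ*u.imK*u'.imI^2*u'.imJ*u'.imK + (-4 : ℝ)*u.imJ*u.imK*u'.re*u'.imI*u'.imK^2 + (-4 : ℝ)*u.imJ*u.imK*u'.re*u'.imI*u'.imJ^2 + (-4 : ℝ)*u.imJ*u.imK*u'.re*u'.imI^3 + (4 : ℝ)*u.imJ*u.imK*u'.re^2*u'.imJ*u'.imK + (-4 : ℝ)*u.imJ*u.imK*u'.re^3*u'.imI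 + (-1 : ℝ)*u.imJ^2*u'.imK^4 + u.imJ^2*u'.imJ^4 + (2 : ℝ)*u.imJ^2*u'.imI^2*u'.imJ^2 + u.imJ^2*u'.imI^4 + (-2 : ℝ)*u.imJ^2*u'.re^2*u'.imK^2 + (-1 : ℝ)*u.imJ^2*u'.re^4 + (4 : ℝ)*u.imI*u.imK*u'.imI*u'.imK^3 + (4 : ℝ)*u.imI*u.imK*u'.imI*u'.imJ^2*u'.imK + (4 : ℝ)*u.imI*u.imK*u'.imI^3*u'.imK + (4 : ℝ)*u.imI*u.imK*u'.re*u'.imJ*u'.imK^2 + (4 : ℝ)*u.imI*u.imK*u'.re*u'.imJ^3 + (4 : ℝ)*u.imI*u.imK*u'.re*u'.imI^2*u'.imJ + (4 : ℝ)*u.imI*u.imK*u'.re^2*u'.imI*u'.imK + (4 : ℝ)*u.imI*u.imK*u'.re^3*u'.imJ + (-1 : ℝ)*u.imI^2*u'.imK^4 + u.imI^2*u'.imJ^4 + (2 : ℝ)*u.imI^2*u'.imI^2*u'.imJ^2 + u.imI^2*u'.imI^4 + (-2 : ℝ)*u.imI^2*u'.re^2*u'.imK^2 + (-1 : ℝ)*u.imI^2*u'.re^4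 + (4 : ℝ)*u.re*u.imJ*u'.imI*u'.imK^3 + (4 : ℝ)*u.re*u.imJ*u'.imI*u'.imJ^2*u'.imK + (4 : ℝ)*u.re*u.imJ*u'.imI^3*u'.imK + (4 : ℝ)*u.re*u.imJ*u'.re*u'.imJ*u'.imK^2 + (4 : ℝ)*u.re*u.imJ*u'.re*u'.imJ^3 + (4 : ℝ)*u.re*u.imJ*u'.re*u'.imI^2*u'.imJ + (4 : ℝ)*u.re*u.imJ*u'.re^2*u'.imI*u'.imK + (4 : ℝ)*u.re*u.imJ*u'.re^3*u'.imJ + (-4 : ℝ)*u.re*u.imI*u'.imJ*u'.imK^3 + (-4 : ℝ)*u.re*u.imI*u'.imJ^3*u'.imK + (-4 : ℝ)*u.re*u.imI*u'.imI^2*u'.imJ*u'.imK + (4 : ℝ)*u.re*u.imI*u'.re*u'.imI*u'.imK^2 + (4 : ℝ)*u.re*u.imI*u'.re*u'.imI*u'.imJ^2 + (4 : ℝ)*u.re*u.imI*u'.re*u'.imI^3 + (-4 : ℝ)*u.re*u.imI*u'.re^2*u'.imJ*u'.imK + (4 : ℝ)*u.re*u.imI*u'.re^3*u'.imI + u.re^2*u'.imK^4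 + (-1 : ℝ)*u.re^2*u'.imJ^4 + (-2 : ℝ)*u.re^2*u'.imI^2*u'.imJ^2 + (-1 : ℝ)*u.re^2*u'.imI^4 + (2 : ℝ)*u.re^2*u'.re^2*u'.imK^2 + u.re^2*u'.re^4) * hu + ((-1 : ℝ) + u'.imK^2 + (-1 : ℝ)*u'.imJ^2 + (-1 : ℝ)*u'.imI^2 + u'.re^2 + (4 : ℝ)*u.imJ*u.imK*u'.imJ*u'.imK + (-4 : ℝ)*u.imJ*u.imK*u'.re*u'.imI + (-2 : ℝ)*u.imJ^2*u'.imK^2 + (2 : ℝ)*u.imJ^2*u'.imJ^2 + (2 : ℝ)*u.imJ^2*u'.imI^2 + (-2 : ℝ)*u.imJ^2*u'.re^2 + (4 : ℝ)*u.imI*u.imK*u'.imI*u'.imK + (4 : ℝ)*u.imI*u.imK*u'.re*u'.imJ + (-2 : ℝ)*u.imI^2*u'.imK^2 + (2 : ℝ)*u.imI^2*u'.imJ^2 + (2 : ℝ)*u.imI^2*u'.imI^2 + (-2 : ℝ)*u.imI^2*u'.re^2 + (4 : ℝ)*u.re*u.imJ*u'.imI*u'.imK + (4 : ℝ)*u.re*u.imJ*u'.re*u'.imJ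 + (-4 : ℝ)*u.re*u.imI*u'.imJ*u'.imK + (4 : ℝ)*u.re*u.imI*u'.re*u'.imI) * hu'

lemma Af_eq (m m' : E3 × E3) (i : Fin 3) : Af m m' i =
    crossE3 m.1 m'.1 i + crossE3 m.2 m'.2 i +
      crossE3 (crossE3 m.1 m.2) (crossE3 m'.1 m'.2) i := by
  simp [Af]

lemma key_A0 {u u' : ℍ} (huu : ‖u‖ = 1) (huu' : ‖u'‖ = 1) :
    Af (Pmap u) (Pmap u') 0 = 4 * (u' * star u).re * (u' * star u).imI := by
  have hu := normSq_eq_one huu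
  have hu' := normSq_eq_one huu'
  rw [Af_eq]
  unfold Pmap
  rw [rotVec_coord, rotVec_coord, rotVec_coord, rotVec_coord]
  simp only [crossE3, mkE3_0, mkE3_1, mkE3_2, qe1, qe2, Quaternion.re_mul, Quaternion.imI_mul,
    Quaternion.re_star, Quaternion.imI_star, Quaternion.imJ_star, Quaternion.imK_star]
  linear_combination ((2 : ℝ)*u'.imJ*u'.imK + (-2 : ℝ)*u'.imJ*u'.imK^3 + (-2 : ℝ)*u'.imJ^3*u'.imK + (-2 : ℝ)*u'.imI^2*u'.imJ*u'.imK + (-2 : ℝ)*u'.re*u'.imI + (2 : ℝ)*u'.re*u'.imI*u'.imK^2 + (2 : ℝ)*u'.re*u'.imI*u'.imJ^2 + (2 : ℝ)*u'.re*u'.imI^3 + (-2 : ℝ)*u'.re^2*u'.imJ*u'.imK + (2 : ℝ)*u'.re^3*u'.imI + (-2 : ℝ)*u.imK^2*u'.imJ*u'.imK^3 + (-2 : ℝ)*u.imK^2*u'.imJ^3*u'.imK + (-2 : ℝ)*u.imK^2*u'.imI^2*u'.imJ*u'.imK + (2 : ℝ)*u.imK^2*u'.re*u'.imI*u'.imK^2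 + (2 : ℝ)*u.imK^2*u'.re*u'.imI*u'.imJ^2 + (2 : ℝ)*u.imK^2*u'.re*u'.imI^3 + (-2 : ℝ)*u.imK^2*u'.re^2*u'.imJ*u'.imK + (2 : ℝ)*u.imK^2*u'.re^3*u'.imI + (2 : ℝ)*u.imJ*u.imK*u'.imK^4 + (-2 : ℝ)*u.imJ*u.imK*u'.imJ^4 + (-4 : ℝ)*u.imJ*u.imK*u'.imI^2*u'.imJ^2 + (-2 : ℝ)*u.imJ*u.imK*u'.imI^4 + (4 : ℝ)*u.imJ*u.imK*u'.re^2*u'.imK^2 + (2 : ℝ)*u.imJ*u.imK*u'.re^4 + (2 : ℝ)*u.imJ^2*u'.imJ*u'.imK^3 + (2 : ℝ)*u.imJ^2*u'.imJ^3*u'.imK + (2 : ℝ)*u.imJ^2*u'.imI^2*u'.imJ*u'.imK + (-2 : ℝ)*u.imJ^2*u'.re*u'.imI*u'.imK^2 + (-2 : ℝ)*u.imJ^2*u'.re*u'.imI*u'.imJ^2 + (-2 : ℝ)*u.imJ^2*u'.re*u'.imI^3 + (2 : ℝ)*u.imJ^2*u'.re^2*u'.imJ*u'.imK + (-2 : ℝ)*u.imJ^2*u'.re^3*u'.imI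 + (2 : ℝ)*u.imI^2*u'.imJ*u'.imK^3 + (2 : ℝ)*u.imI^2*u'.imJ^3*u'.imK + (2 : ℝ)*u.imI^2*u'.imI^2*u'.imJ*u'.imK + (-2 : ℝ)*u.imI^2*u'.re*u'.imI*u'.imK^2 + (-2 : ℝ)*u.imI^2*u'.re*u'.imI*u'.imJ^2 + (-2 : ℝ)*u.imI^2*u'.re*u'.imI^3 + (2 : ℝ)*u.imI^2*u'.re^2*u'.imJ*u'.imK + (-2 : ℝ)*u.imI^2*u'.re^3*u'.imI + (-2 : ℝ)*u.re*u.imI*u'.imK^4 + (2 : ℝ)*u.re*u.imI*u'.imJ^4 + (4 : ℝ)*u.re*u.imI*u'.imI^2*u'.imJ^2 + (2 : ℝ)*u.re*u.imI*u'.imI^4 + (-4 : ℝ)*u.re*u.imI*u'.re^2*u'.imK^2 + (-2 : ℝ)*u.re*u.imI*u'.re^4 + (-2 : ℝ)*u.re^2*u'.imJ*u'.imK^3 + (-2 : ℝ)*u.re^2*u'.imJ^3*u'.imK + (-2 : ℝ)*u.re^2*u'.imI^2*u'.imJ*u'.imK + (2 : ℝ)*u.re^2*u'.re*u'.imI*u'.imK^2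 + (2 : ℝ)*u.re^2*u'.re*u'.imI*u'.imJ^2 + (2 : ℝ)*u.re^2*u'.re*u'.imI^3 + (-2 : ℝ)*u.re^2*u'.re^2*u'.imJ*u'.imK + (2 : ℝ)*u.re^2*u'.re^3*u'.imI) * hu + ((-2 : ℝ)*u'.imJ*u'.imK + (2 : ℝ)*u'.re*u'.imI + (2 : ℝ)*u.imJ*u.imK*u'.imK^2 + (-2 : ℝ)*u.imJ*u.imK*u'.imJ^2 + (-2 : ℝ)*u.imJ*u.imK*u'.imI^2 + (2 : ℝ)*u.imJ*u.imK*u'.re^2 + (4 : ℝ)*u.imJ^2*u'.imJ*u'.imK + (-4 : ℝ)*u.imJ^2*u'.re*u'.imI + (4 : ℝ)*u.imI^2*u'.imJ*u'.imK + (-4 : ℝ)*u.imI^2*u'.re*u'.imI + (-2 : ℝ)*u.re*u.imI*u'.imK^2 + (2 : ℝ)*u.re*u.imI*u'.imJ^2 + (2 : ℝ)*u.re*u.imI*u'.imI^2 + (-2 : ℝ)*u.re*u.imI*u'.re^2) * hu'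

lemma key_A1 {u u' : ℍ} (huu : ‖u‖ = 1) (huu' : ‖u'‖ = 1) :
    Af (Pmap u) (Pmap u') 1 = 4 * (u' * star u).re * (u' * star u).imJ := by
  have hu := normSq_eq_one huu
  have hu' := normSq_eq_one huu'
  rw [Af_eq]
  unfold Pmap
  rw [rotVec_coord, rotVec_coord, rotVec_coord, rotVec_coord]
  simp only [crossE3, mkE3_0, mkE3_1, mkE3_2, qe1, qe2, Quaternion.re_mul, Quaternion.imJ_mul,
    Quaternion.re_star, Quaternion.imI_star, Quaternion.imJ_star, Quaternion.imK_star]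
  linear_combination ((-2 : ℝ)*u'.imI*u'.imK + (2 : ℝ)*u'.imI*u'.imK^3 + (2 : ℝ)*u'.imI*u'.imJ^2*u'.imK + (2 : ℝ)*u'.imI^3*u'.imK + (-2 : ℝ)*u'.re*u'.imJ + (2 : ℝ)*u'.re*u'.imJ*u'.imK^2 + (2 : ℝ)*u'.re*u'.imJ^3 + (2 : ℝ)*u'.re*u'.imI^2*u'.imJ + (2 : ℝ)*u'.re^2*u'.imI*u'.imK + (2 : ℝ)*u'.re^3*u'.imJ + (2 : ℝ)*u.imK^2*u'.imI*u'.imK^3 + (2 : ℝ)*u.imK^2*u'.imI*u'.imJ^2*u'.imK + (2 : ℝ)*u.imK^2*u'.imI^3*u'.imK + (2 : ℝ)*u.imK^2*u'.re*u'.imJ*u'.imK^2 + (2 : ℝ)*u.imK^2*u'.re*u'.imJ^3 + (2 : ℝ)*u.imK^2*u'.re*u'.imI^2*u'.imJ + (2 : ℝ)*u.imK^2*u'.re^2*u'.imI*u'.imK + (2 : ℝ)*u.imK^2*u'.re^3*u'.imJ + (-2 : ℝ)*u.imJ^2*u'.imI*u'.imK^3 + (-2 : ℝ)*u.imJ^2*u'.imI*u'.imJ^2*u'.imK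 + (-2 : ℝ)*u.imJ^2*u'.imI^3*u'.imK + (-2 : ℝ)*u.imJ^2*u'.re*u'.imJ*u'.imK^2 + (-2 : ℝ)*u.imJ^2*u'.re*u'.imJ^3 + (-2 : ℝ)*u.imJ^2*u'.re*u'.imI^2*u'.imJ + (-2 : ℝ)*u.imJ^2*u'.re^2*u'.imI*u'.imK + (-2 : ℝ)*u.imJ^2*u'.re^3*u'.imJ + (-2 : ℝ)*u.imI*u.imK*u'.imK^4 + (2 : ℝ)*u.imI*u.imK*u'.imJ^4 + (4 : ℝ)*u.imI*u.imK*u'.imI^2*u'.imJ^2 + (2 : ℝ)*u.imI*u.imK*u'.imI^4 + (-4 : ℝ)*u.imI*u.imK*u'.re^2*u'.imK^2 + (-2 : ℝ)*u.imI*u.imK*u'.re^4 + (-2 : ℝ)*u.imI^2*u'.imI*u'.imK^3 + (-2 : ℝ)*u.imI^2*u'.imI*u'.imJ^2*u'.imK + (-2 : ℝ)*u.imI^2*u'.imI^3*u'.imK + (-2 : ℝ)*u.imI^2*u'.re*u'.imJ*u'.imK^2 + (-2 : ℝ)*u.imI^2*u'.re*u'.imJ^3 + (-2 : ℝ)*u.imI^2*u'.re*u'.imI^2*u'.imJ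 + (-2 : ℝ)*u.imI^2*u'.re^2*u'.imI*u'.imK + (-2 : ℝ)*u.imI^2*u'.re^3*u'.imJ + (-2 : ℝ)*u.re*u.imJ*u'.imK^4 + (2 : ℝ)*u.re*u.imJ*u'.imJ^4 + (4 : ℝ)*u.re*u.imJ*u'.imI^2*u'.imJ^2 + (2 : ℝ)*u.re*u.imJ*u'.imI^4 + (-4 : ℝ)*u.re*u.imJ*u'.re^2*u'.imK^2 + (-2 : ℝ)*u.re*u.imJ*u'.re^4 + (2 : ℝ)*u.re^2*u'.imI*u'.imK^3 + (2 : ℝ)*u.re^2*u'.imI*u'.imJ^2*u'.imK + (2 : ℝ)*u.re^2*u'.imI^3*u'.imK + (2 : ℝ)*u.re^2*u'.re*u'.imJ*u'.imK^2 + (2 : ℝ)*u.re^2*u'.re*u'.imJ^3 + (2 : ℝ)*u.re^2*u'.re*u'.imI^2*u'.imJ + (2 : ℝ)*u.re^2*u'.re^2*u'.imI*u'.imK + (2 : ℝ)*u.re^2*u'.re^3*u'.imJ) * hu + ((2 : ℝ)*u'.imI*u'.imK + (2 : ℝ)*u'.re*u'.imJ + (-4 : ℝ)*u.imJ^2*u'.imI*u'.imK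 + (-4 : ℝ)*u.imJ^2*u'.re*u'.imJ + (-2 : ℝ)*u.imI*u.imK*u'.imK^2 + (2 : ℝ)*u.imI*u.imK*u'.imJ^2 + (2 : ℝ)*u.imI*u.imK*u'.imI^2 + (-2 : ℝ)*u.imI*u.imK*u'.re^2 + (-4 : ℝ)*u.imI^2*u'.imI*u'.imK + (-4 : ℝ)*u.imI^2*u'.re*u'.imJ + (-2 : ℝ)*u.re*u.imJ*u'.imK^2 + (2 : ℝ)*u.re*u.imJ*u'.imJ^2 + (2 : ℝ)*u.re*u.imJ*u'.imI^2 + (-2 : ℝ)*u.re*u.imJ*u'.re^2) * hu'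

lemma key_A2 {u u' : ℍ} (huu : ‖u‖ = 1) (huu' : ‖u'‖ = 1) :
    Af (Pmap u) (Pmap u') 2 = 4 * (u' * star u).re * (u' * star u).imK := by
  have hu := normSq_eq_one huu
  have hu' := normSq_eq_one huu'
  rw [Af_eq]
  unfold Pmap
  rw [rotVec_coord, rotVec_coord, rotVec_coord, rotVec_coord]
  simp only [crossE3, mkE3_0, mkE3_1, mkE3_2, qe1, qe2, Quaternion.re_mul, Quaternion.imK_mul,
    Quaternion.re_star, Quaternion.imI_star, Quaternion.imJ_star, Quaternion.imK_star]
  linear_combination ((-4 : ℝ)*u.imJ*u.imK*u'.imI*u'.imK^3 + (-4 : ℝ)*u.imJ*u.imK*u'.imI*u'.imJ^2*u'.imK + (-4 : ℝ)*u.imJ*u.imK*u'.imI^3*u'.imK + (-4 : ℝ)*u.imJ*u.imK*u'.re*u'.imJ*u'.imK^2 + (-4 : ℝ)*u.imJ*u.imK*u'.re*u'.imJ^3 + (-4 : ℝ)*u.imJ*u.imK*u'.re*u'.imI^2*u'.imJ + (-4 : ℝ)*u.imJ*u.imK*u'.re^2*u'.imI*u'.imK + (-4 : ℝ)*u.imJ*u.imK*u'.re^3*u'.imJ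 + (4 : ℝ)*u.imI*u.imK*u'.imJ*u'.imK^3 + (4 : ℝ)*u.imI*u.imK*u'.imJ^3*u'.imK + (4 : ℝ)*u.imI*u.imK*u'.imI^2*u'.imJ*u'.imK + (-4 : ℝ)*u.imI*u.imK*u'.re*u'.imI*u'.imK^2 + (-4 : ℝ)*u.imI*u.imK*u'.re*u'.imI*u'.imJ^2 + (-4 : ℝ)*u.imI*u.imK*u'.re*u'.imI^3 + (4 : ℝ)*u.imI*u.imK*u'.re^2*u'.imJ*u'.imK + (-4 : ℝ)*u.imI*u.imK*u'.re^3*u'.imI + (4 : ℝ)*u.re*u.imJ*u'.imJ*u'.imK^3 + (4 : ℝ)*u.re*u.imJ*u'.imJ^3*u'.imK + (4 : ℝ)*u.re*u.imJ*u'.imI^2*u'.imJ*u'.imK + (-4 : ℝ)*u.re*u.imJ*u'.re*u'.imI*u'.imK^2 + (-4 : ℝ)*u.re*u.imJ*u'.re*u'.imI*u'.imJ^2 + (-4 : ℝ)*u.re*u.imJ*u'.re*u'.imI^3 + (4 : ℝ)*u.re*u.imJ*u'.re^2*u'.imJ*u'.imK + (-4 : ℝ)*u.re*u.imJ*u'.re^3*u'.imI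 + (4 : ℝ)*u.re*u.imI*u'.imI*u'.imK^3 + (4 : ℝ)*u.re*u.imI*u'.imI*u'.imJ^2*u'.imK + (4 : ℝ)*u.re*u.imI*u'.imI^3*u'.imK + (4 : ℝ)*u.re*u.imI*u'.re*u'.imJ*u'.imK^2 + (4 : ℝ)*u.re*u.imI*u'.re*u'.imJ^3 + (4 : ℝ)*u.re*u.imI*u'.re*u'.imI^2*u'.imJ + (4 : ℝ)*u.re*u.imI*u'.re^2*u'.imI*u'.imK + (4 : ℝ)*u.re*u.imI*u'.re^3*u'.imJ) * hu + ((-4 : ℝ)*u.imJ*u.imK*u'.imI*u'.imK + (-4 : ℝ)*u.imJ*u.imK*u'.re*u'.imJ + (4 : ℝ)*u.imI*u.imK*u'.imJ*u'.imK + (-4 : ℝ)*u.imI*u.imK*u'.re*u'.imI + (4 : ℝ)*u.re*u.imJ*u'.imJ*u'.imK + (-4 : ℝ)*u.re*u.imJ*u'.re*u'.imI + (4 : ℝ)*u.re*u.imI*u'.imI*u'.imK + (4 : ℝ)*u.re*u.imI*u'.re*u'.imJ) * hu'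

/-- The key lift identity: at pairs of frames with positive relative real part,
`rho` recovers the quaternion ratio. -/
lemma rho_Pmap {u u' : ℍ} (hu : ‖u‖ = 1) (hu' : ‖u'‖ = 1)
    (hpos : 0 < (u' * star u).re) :
    rho (Pmap u) (Pmap u') = u' * star u := by
  have hT := key_T hu hu'
  have hne : (2 * (2 * (u' * star u).re)) ≠ 0 := by positivity
  have hsq : Real.sqrt (1 + Tf (Pmap u) (Pmap u')) = 2 * (u' * star u).re := by
    rw [hT, show 4 * ((u' * star u).re)^2 = (2 * (u' * star u).re)^2 by ring]
    exact Real.sqrt_sq (by positivity)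
  apply Q_ext
  · rw [show (rho (Pmap u) (Pmap u')).re
        = (2 * Real.sqrt (1 + Tf (Pmap u) (Pmap u')))⁻¹ * (1 + Tf (Pmap u) (Pmap u')) from rfl,
      hsq, hT, show 4 * ((u' * star u).re)^2
        = (2 * (2 * (u' * star u).re)) * (u' * star u).re by ring,
      inv_mul_cancel_left₀ hne]
  · rw [show (rho (Pmap u) (Pmap u')).imI
        = (2 * Real.sqrt (1 + Tf (Pmap u) (Pmap u')))⁻¹ * (Af (Pmap u) (Pmap u') 0) from rfl,
      hsq, key_A0 hu hu', show 4 * (u' * star u).re * (u' * star u).imI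
        = (2 * (2 * (u' * star u).re)) * (u' * star u).imI by ring,
      inv_mul_cancel_left₀ hne]
  · rw [show (rho (Pmap u) (Pmap u')).imJ
        = (2 * Real.sqrt (1 + Tf (Pmap u) (Pmap u')))⁻¹ * (Af (Pmap u) (Pmap u') 1) from rfl,
      hsq, key_A1 hu hu', show 4 * (u' * star u).re * (u' * star u).imJ
        = (2 * (2 * (u' * star u).re)) * (u' * star u).imJ by ring,
      inv_mul_cancel_left₀ hne]
  · rw [show (rho (Pmap u) (Pmap u')).imK
        = (2 * Real.sqrt (1 + Tf (Pmap u) (Pmap u')))⁻¹ * (Af (Pmap u) (Pmap u') 2) from rfl,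
      hsq, key_A2 hu hu', show 4 * (u' * star u).re * (u' * star u).imK
        = (2 * (2 * (u' * star u).re)) * (u' * star u).imK by ring,
      inv_mul_cancel_left₀ hne]


/-! ### Pure-quaternion algebra helpers -/

lemma fromQ_toQ (x : E3) : fromQ (toQ x) = x := by
  apply E3_ext <;> rfl

lemma star_toQ (x : E3) : star (toQ x) = -(toQ x) := by
  apply Q_ext <;> simp [toQ]

lemma fromQ_neg (q : ℍ) : fromQ (-q) = -(fromQ q) := by
  apply E3_ext <;> simp [fromQ, mkE3]

lemma fromQ_smulQ (r : ℝ) (q : ℍ) : fromQ (r • q) = r • (fromQ q) := by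
  apply E3_ext <;>
    simp [fromQ, Quaternion.imI_smul, Quaternion.imJ_smul, Quaternion.imK_smul, PiLp.smul_apply]

lemma toQ_mul_self {x : E3} (hx : x 0^2 + x 1^2 + x 2^2 = 1) :
    toQ x * toQ x = -1 := by
  apply Q_ext <;>
    simp only [toQ, mkQ_re, mkQ_imI, mkQ_imJ, mkQ_imK, Quaternion.re_mul, Quaternion.imI_mul, Quaternion.imJ_mul,
      Quaternion.imK_mul, Quaternion.re_neg, Quaternion.imI_neg, Quaternion.imJ_neg,
      Quaternion.imK_neg, Quaternion.re_one, Quaternion.imI_one, Quaternion.imJ_one,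
      Quaternion.imK_one, neg_zero]
  · linear_combination -hx
  all_goals ring

lemma toQ_anticomm {x y : E3} (h : x 0 * y 0 + x 1 * y 1 + x 2 * y 2 = 0) :
    toQ x * toQ y = -(toQ y * toQ x) := by
  apply Q_ext <;>
    simp only [toQ, mkQ_re, mkQ_imI, mkQ_imJ, mkQ_imK, Quaternion.re_mul, Quaternion.imI_mul, Quaternion.imJ_mul,
      Quaternion.imK_mul, Quaternion.re_neg, Quaternion.imI_neg, Quaternion.imJ_neg,
      Quaternion.imK_neg]
  · linear_combination -(2:ℝ) * h
  all_goals ring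

lemma sandwich {v y : E3} (hv : v 0^2 + v 1^2 + v 2^2 = 1) :
    toQ v * toQ y * toQ v = toQ y - (2 * (v 0 * y 0 + v 1 * y 1 + v 2 * y 2)) • toQ v := by
  apply Q_ext <;>
    simp only [toQ, mkQ_re, mkQ_imI, mkQ_imJ, mkQ_imK, Quaternion.re_mul, Quaternion.imI_mul, Quaternion.imJ_mul,
      Quaternion.imK_mul, Quaternion.re_sub, Quaternion.imI_sub, Quaternion.imJ_sub,
      Quaternion.imK_sub, Quaternion.re_smul, Quaternion.imI_smul, Quaternion.imJ_smul,
      Quaternion.imK_smul, smul_eq_mul]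
  · linear_combination ((0:ℝ)) * hv
  · linear_combination (y 0) * hv
  · linear_combination (y 1) * hv
  · linear_combination (y 2) * hv

/-! ### Surjectivity of the double cover -/

lemma step1 {m : E3 × E3} (hm : m ∈ unitTangentS2) :
    ∃ u : ℍ, ‖u‖ = 1 ∧ rotVec u qe1 = m.1 := by
  rw [mem_uts_iff] at hm
  obtain ⟨hx, -, -⟩ := hm
  by_cases h0 : m.1 0 = -1
  · have h1 : m.1 1 = 0 := by nlinarith
    have h2 : m.1 2 = 0 := by nlinarith
    refine ⟨mkQ 0 0 1 0, ?_, ?_⟩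
    · apply norm_eq_one_of_normSq; norm_num
    · rw [rotVec_coord]
      apply E3_ext <;> simp [qe1, h0, h1, h2]
  · have hpos : 0 < 1 + m.1 0 := by
      rcases lt_or_eq_of_le (show -1 ≤ m.1 0 by nlinarith [sq_nonneg (m.1 1), sq_nonneg (m.1 2)]) with h | h
      · linarith
      · exact absurd h.symm h0
    set c : ℍ := mkQ (1 + m.1 0) 0 (-(m.1 2)) (m.1 1) with hc
    have hns : normSq c = 2 * (1 + m.1 0) := by
      rw [normSq_def']
      simp only [hc, mkQ_re, mkQ_imI, mkQ_imJ, mkQ_imK]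
      linear_combination hx
    have hcns : ‖c‖ * ‖c‖ = 2 * (1 + m.1 0) := by
      rw [← normSq_eq_norm_mul_self, hns]
    have hcn0 : ‖c‖ ≠ 0 := by
      intro h; rw [h] at hcns; nlinarith
    refine ⟨‖c‖⁻¹ • c, ?_, ?_⟩
    · rw [norm_smul, norm_inv, norm_norm, inv_mul_cancel₀ hcn0]
    · rw [rotVec_smul]
      have key : rotVec c qe1 = (2 * (1 + m.1 0)) • m.1 := by
        rw [rotVec_coord]
        apply E3_ext <;>
          simp only [hc, mkQ_re, mkQ_imI, mkQ_imJ, mkQ_imK, qe1, mkE3_0, mkE3_1, mkE3_2,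
            PiLp.smul_apply, smul_eq_mul]
        · linear_combination ((-1 : ℝ)) * hx
        · linear_combination ((0:ℝ)) * hx
        · linear_combination ((0:ℝ)) * hx
      rw [key, smul_smul]
      have : (‖c‖⁻¹)^2 * (2 * (1 + m.1 0)) = 1 := by
        rw [← hcns]; field_simp
      rw [this, one_smul]

lemma surj {m : E3 × E3} (hm : m ∈ unitTangentS2) :
    ∃ u : ℍ, ‖u‖ = 1 ∧ Pmap u = m := by
  obtain ⟨u₁, hu₁, hx⟩ := step1 hm
  have hP1 : (m.1, rotVec u₁ qe2) ∈ unitTangentS2 := by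
    have := Pmap_mem hu₁
    unfold Pmap at this
    rwa [hx] at this
  set v₁ := rotVec u₁ qe2 with hv₁def
  rw [mem_uts_iff] at hm hP1
  obtain ⟨hxu, hvu, hxv⟩ := hm
  obtain ⟨-, hv₁u, hxv₁⟩ := hP1
  dsimp only at hv₁u hxv₁
  have hXX := toQ_mul_self hxu
  by_cases hcase : m.2 = -v₁
  · refine ⟨toQ m.1 * u₁, ?_, ?_⟩
    · rw [norm_mul, hu₁, mul_one]
      apply norm_eq_one_of_normSq
      simpa [toQ] using hxu
    · unfold Pmap
      rw [rotVec_mul, rotVec_mul, hx, ← hv₁def]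
      have hfix : rotVec (toQ m.1) m.1 = m.1 := by
        unfold rotVec
        have ha : toQ m.1 * toQ m.1 * star (toQ m.1) = toQ m.1 := by
          rw [hXX, star_toQ]; noncomm_ring
        rw [ha, fromQ_toQ]
      have hperp : rotVec (toQ m.1) v₁ = -v₁ := by
        unfold rotVec
        have ha : toQ m.1 * toQ v₁ * star (toQ m.1) = -(toQ v₁) := by
          rw [star_toQ, toQ_anticomm (by linear_combination hxv₁)]
          calc -(toQ v₁ * toQ m.1) * -(toQ m.1) = toQ v₁ * (toQ m.1 * toQ m.1) := by
                noncomm_ring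
            _ = -(toQ v₁) := by rw [hXX]; noncomm_ring
        rw [ha, fromQ_neg, fromQ_toQ]
      rw [hfix, hperp, ← hcase]
  · have hsum : m.2 + v₁ ≠ 0 := by
      intro h
      exact hcase (by rw [eq_neg_iff_add_eq_zero]; exact h)
    have hdot : 0 < 2 * (1 + (m.2 0 * v₁ 0 + m.2 1 * v₁ 1 + m.2 2 * v₁ 2)) := by
      have h1 : 0 < ‖m.2 + v₁‖^2 := pow_pos (norm_pos_iff.mpr hsum) 2
      rw [normsq_eq] at h1
      simp only [PiLp.add_apply] at h1
      nlinarith [h1, hvu, hv₁u]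
    set c : ℍ := 1 - toQ m.2 * toQ v₁ with hc
    have hns : normSq c = 2 * (1 + (m.2 0 * v₁ 0 + m.2 1 * v₁ 1 + m.2 2 * v₁ 2)) := by
      rw [normSq_def']
      simp only [hc, Quaternion.re_sub, Quaternion.imI_sub, Quaternion.imJ_sub,
        Quaternion.imK_sub, Quaternion.re_one, Quaternion.imI_one, Quaternion.imJ_one,
        Quaternion.imK_one, Quaternion.re_mul, Quaternion.imI_mul, Quaternion.imJ_mul,
        Quaternion.imK_mul, toQ, mkQ_re, mkQ_imI, mkQ_imJ, mkQ_imK]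
      linear_combination (v₁ 2^2 + v₁ 1^2 + v₁ 0^2) * hvu + ((1 : ℝ)) * hv₁u
    have hcns : ‖c‖ * ‖c‖ = normSq c := (normSq_eq_norm_mul_self c).symm
    have hcn0 : ‖c‖ ≠ 0 := by
      intro h; rw [h, hns] at hcns; nlinarith
    have hstarc : star c = 1 - toQ v₁ * toQ m.2 := by
      rw [hc, star_sub, star_one, star_mul, star_toQ, star_toQ]
      noncomm_ring
    refine ⟨(‖c‖⁻¹ • c) * u₁, ?_, ?_⟩
    · rw [norm_mul, hu₁, mul_one, norm_smul, norm_inv, norm_norm, inv_mul_cancel₀ hcn0]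
    · unfold Pmap
      rw [rotVec_mul, rotVec_mul, hx, ← hv₁def, rotVec_smul, rotVec_smul]
      have hcomm : c * toQ m.1 = toQ m.1 * c := by
        rw [hc]
        have a1 : toQ m.2 * toQ m.1 = -(toQ m.1 * toQ m.2) := toQ_anticomm (by linear_combination hxv)
        have a2 : toQ v₁ * toQ m.1 = -(toQ m.1 * toQ v₁) := toQ_anticomm (by linear_combination hxv₁)
        calc (1 - toQ m.2 * toQ v₁) * toQ m.1
            = toQ m.1 - toQ m.2 * (toQ v₁ * toQ m.1) := by noncomm_ring
          _ = toQ m.1 - toQ m.2 * (-(toQ m.1 * toQ v₁)) := by rw [a2]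
          _ = toQ m.1 + (toQ m.2 * toQ m.1) * toQ v₁ := by noncomm_ring
          _ = toQ m.1 + (-(toQ m.1 * toQ m.2)) * toQ v₁ := by rw [a1]
          _ = toQ m.1 * (1 - toQ m.2 * toQ v₁) := by noncomm_ring
      have hfix : rotVec c m.1 = normSq c • m.1 := by
        unfold rotVec
        rw [hcomm, mul_assoc, self_mul_star, mul_coe_eq_smul, fromQ_smulQ, fromQ_toQ]
      have hWW : toQ v₁ * toQ v₁ = -1 := toQ_mul_self hv₁u
      have hsand : toQ m.2 * toQ v₁ * toQ m.2
          = toQ v₁ - (2 * (m.2 0 * v₁ 0 + m.2 1 * v₁ 1 + m.2 2 * v₁ 2)) • toQ m.2 :=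
        sandwich hvu
      have hrot : rotVec c v₁ = normSq c • m.2 := by
        unfold rotVec
        have hkey : c * toQ v₁ * star c = normSq c • toQ m.2 := by
          calc c * toQ v₁ * star c
              = toQ v₁ - (toQ v₁ * toQ v₁) * toQ m.2 - toQ m.2 * (toQ v₁ * toQ v₁)
                + toQ m.2 * ((toQ v₁ * toQ v₁) * (toQ v₁ * toQ m.2)) := by
                rw [hc, hstarc]; noncomm_ring
            _ = toQ v₁ + toQ m.2 + toQ m.2 - toQ m.2 * toQ v₁ * toQ m.2 := by
                rw [hWW]; noncomm_ring
            _ = toQ v₁ + toQ m.2 + toQ m.2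
                - (toQ v₁ - (2 * (m.2 0 * v₁ 0 + m.2 1 * v₁ 1 + m.2 2 * v₁ 2)) • toQ m.2) := by
                rw [hsand]
            _ = normSq c • toQ m.2 := by rw [hns]; module
        rw [hkey, fromQ_smulQ, fromQ_toQ]
      rw [hfix, hrot, smul_smul, smul_smul, ← hcns]
      have h1 : ‖c‖⁻¹ ^ 2 * (‖c‖ * ‖c‖) = 1 := by
        field_simp
      rw [h1, one_smul, one_smul]


/-! ### The main properties of `rho` -/

lemma rho_spec {m m' : E3 × E3} (hm : m ∈ unitTangentS2) (hm' : m' ∈ unitTangentS2)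
    (hT : 0 < Tf m m') :
    ‖rho m m'‖ = 1 ∧ rotVec (rho m m') m.1 = m'.1 ∧ rotVec (rho m m') m.2 = m'.2 := by
  obtain ⟨u, hu, hPu⟩ := surj hm
  obtain ⟨u', hu', hPu'⟩ := surj hm'
  have key : ∀ w : ℍ, ‖w‖ = 1 → Pmap w = m' → 0 < (w * star u).re →
      ‖rho m m'‖ = 1 ∧ rotVec (rho m m') m.1 = m'.1 ∧ rotVec (rho m m') m.2 = m'.2 := by
    intro w hw hPw hpos
    have hρ : rho m m' = w * star u := by
      rw [← hPu, ← hPw]; exact rho_Pmap hu hw hpos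
    have hm1 : m.1 = rotVec u qe1 := by rw [← hPu]; rfl
    have hm2 : m.2 = rotVec u qe2 := by rw [← hPu]; rfl
    refine ⟨?_, ?_, ?_⟩
    · rw [hρ, norm_mul, Quaternion.norm_star, hu, hw, mul_one]
    · rw [hρ, hm1, rotVec_cancel hu, ← hPw]; rfl
    · rw [hρ, hm2, rotVec_cancel hu, ← hPw]; rfl
  have hT4 : 1 + Tf m m' = 4 * ((u' * star u).re)^2 := by
    rw [← hPu, ← hPu']; exact key_T hu hu'
  have hre2 : 0 < ((u' * star u).re)^2 := by nlinarith
  rcases lt_trichotomy ((u' * star u).re) 0 with hneg | h0 | hpos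
  · refine key (-u') (by rw [norm_neg, hu']) (by rw [Pmap_neg, hPu']) ?_
    rw [neg_mul, Quaternion.re_neg]
    linarith
  · rw [h0] at hre2; norm_num at hre2
  · exact key u' hu' hPu' hpos

lemma fiber {r : ℍ} (hr : ‖r‖ = 1) (h1 : rotVec r qe1 = qe1) (h2 : rotVec r qe2 = qe2) :
    r = 1 ∨ r = -1 := by
  have hn := normSq_eq_one hr
  rw [rotVec_coord] at h1 h2
  have a0 : (r.re^2 + r.imI^2 - r.imJ^2 - r.imK^2) * 1 + 2*(r.imI*r.imJ - r.re*r.imK) * 0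
      + 2*(r.imI*r.imK + r.re*r.imJ) * 0 = 1 := by
    have := congrArg (fun z : E3 => z 0) h1
    simpa [qe1] using this
  have a1 : 2*(r.imI*r.imJ + r.re*r.imK) * 0 + (r.re^2 - r.imI^2 + r.imJ^2 - r.imK^2) * 1
      + 2*(r.imJ*r.imK - r.re*r.imI) * 0 = 1 := by
    have := congrArg (fun z : E3 => z 1) h2
    simpa [qe2] using this
  have hJ : r.imJ = 0 := by
    have h : r.imJ^2 = 0 := by nlinarith [sq_nonneg r.imK]
    exact pow_eq_zero_iff two_ne_zero |>.mp h
  have hK : r.imK = 0 := by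
    have h : r.imK^2 = 0 := by nlinarith [sq_nonneg r.imJ]
    exact pow_eq_zero_iff two_ne_zero |>.mp h
  have hI : r.imI = 0 := by
    have h : r.imI^2 = 0 := by nlinarith
    exact pow_eq_zero_iff two_ne_zero |>.mp h
  have hre : (r.re - 1) * (r.re + 1) = 0 := by nlinarith
  rcases mul_eq_zero.mp hre with h | h
  · left
    apply Q_ext <;> simp [hI, hJ, hK]
    linarith
  · right
    apply Q_ext <;> simp [hI, hJ, hK]
    linarith

lemma cross_norm {m : E3 × E3} (hm : m ∈ unitTangentS2) : ‖crossE3 m.1 m.2‖ = 1 := by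
  rw [mem_uts_iff] at hm
  obtain ⟨h1, h2, h3⟩ := hm
  rw [norm_eq_one_iff]
  simp only [crossE3, mkE3_0, mkE3_1, mkE3_2]
  linear_combination (m.2 0^2 + m.2 1^2 + m.2 2^2) * h1 + h2
    - (m.1 0 * m.2 0 + m.1 1 * m.2 1 + m.1 2 * m.2 2) * h3

lemma Tf_self {m : E3 × E3} (hm : m ∈ unitTangentS2) : Tf m m = 3 := by
  rw [mem_uts_iff] at hm
  obtain ⟨h1, h2, h3⟩ := hm
  rw [Tf_eq]
  linear_combination (1 + m.2 0^2 + m.2 1^2 + m.2 2^2) * h1 + 2 * h2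
    - (m.1 0 * m.2 0 + m.1 1 * m.2 1 + m.1 2 * m.2 2) * h3

lemma Af_self (m : E3 × E3) : Af m m = 0 := by
  apply E3_ext <;>
    simp only [Af, crossE3, PiLp.add_apply, mkE3_0, mkE3_1, mkE3_2, PiLp.zero_apply] <;> ring

lemma rho_self {m : E3 × E3} (hm : m ∈ unitTangentS2) : rho m m = 1 := by
  unfold rho
  rw [Tf_self hm, Af_self]
  have h4 : Real.sqrt (1 + 3) = 2 := by
    rw [show (1:ℝ) + 3 = 2^2 by norm_num, Real.sqrt_sq (by norm_num)]
  rw [h4]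
  apply Q_ext <;>
    simp [Quaternion.re_smul, Quaternion.imI_smul, Quaternion.imJ_smul, Quaternion.imK_smul,
      PiLp.zero_apply] <;> norm_num

lemma Tf_pos_of_close {m m' : E3 × E3} (hm : m ∈ unitTangentS2) (hm' : m' ∈ unitTangentS2)
    (h1 : ‖m.1 - m'.1‖ ≤ 1/2) (h2 : ‖m.2 - m'.2‖ ≤ 1/2) : 0 < Tf m m' := by
  obtain ⟨hx, hv, -⟩ := id hm
  obtain ⟨hx', hv', -⟩ := id hm'
  have e1 : ⟪m.1, m'.1⟫ ≥ 7/8 := by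
    have hh := norm_sub_sq_real m.1 m'.1
    have : ‖m.1 - m'.1‖^2 ≤ 1/4 := by nlinarith [norm_nonneg (m.1 - m'.1)]
    nlinarith [hx, hx', hh]
  have e2 : ⟪m.2, m'.2⟫ ≥ 7/8 := by
    have hh := norm_sub_sq_real m.2 m'.2
    have : ‖m.2 - m'.2‖^2 ≤ 1/4 := by nlinarith [norm_nonneg (m.2 - m'.2)]
    nlinarith [hv, hv', hh]
  have e3 : ⟪crossE3 m.1 m.2, crossE3 m'.1 m'.2⟫ ≥ -1 := by
    have := abs_real_inner_le_norm (crossE3 m.1 m.2) (crossE3 m'.1 m'.2)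
    rw [cross_norm hm, cross_norm hm'] at this
    have := abs_le.mp (by linarith : |⟪crossE3 m.1 m.2, crossE3 m'.1 m'.2⟫| ≤ 1)
    linarith [this.1]
  unfold Tf
  linarith

/-! ### Continuity of `rho` -/

lemma cont_ev (i : Fin 3) : Continuous fun x : E3 => x i := by
  exact PiLp.continuous_apply 2 _ i

lemma continuous_mkQ {X : Type*} [TopologicalSpace X] {f g h k : X → ℝ}
    (hf : Continuous f) (hg : Continuous g) (hh : Continuous h) (hk : Continuous k) :
    Continuous fun x => mkQ (f x) (g x) (h x) (k x) := by
  have : (fun x => mkQ (f x) (g x) (h x) (k x)) = fun x =>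
      (f x) • (1 : ℍ) + (g x) • mkQ 0 1 0 0 + (h x) • mkQ 0 0 1 0 + (k x) • mkQ 0 0 0 1 := by
    funext x
    apply Q_ext <;>
      simp [Quaternion.re_smul, Quaternion.imI_smul, Quaternion.imJ_smul, Quaternion.imK_smul]
  rw [this]
  fun_prop

lemma cont_cross : Continuous fun q : (E3 × E3) => crossE3 q.1 q.2 := by
  unfold crossE3
  apply continuous_mkE3 <;> fun_prop [cont_ev]

lemma cont_Tf : Continuous fun p : (E3 × E3) × (E3 × E3) => Tf p.1 p.2 := by
  unfold Tf
  exact ((Continuous.inner (by fun_prop) (by fun_prop)).add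
      (Continuous.inner (by fun_prop) (by fun_prop))).add
    (Continuous.inner (cont_cross.comp (by fun_prop)) (cont_cross.comp (by fun_prop)))

lemma crossE3_0 (x y : E3) : crossE3 x y 0 = x 1 * y 2 - x 2 * y 1 := rfl
lemma crossE3_1 (x y : E3) : crossE3 x y 1 = x 2 * y 0 - x 0 * y 2 := rfl
lemma crossE3_2 (x y : E3) : crossE3 x y 2 = x 0 * y 1 - x 1 * y 0 := rfl

lemma cont_Af (i : Fin 3) : Continuous fun p : (E3 × E3) × (E3 × E3) => Af p.1 p.2 i := by
  have e : (fun p : (E3 × E3) × (E3 × E3) => Af p.1 p.2 i) = fun p =>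
      crossE3 p.1.1 p.2.1 i + crossE3 p.1.2 p.2.2 i
        + crossE3 (crossE3 p.1.1 p.1.2) (crossE3 p.2.1 p.2.2) i := by
    funext p; rw [Af_eq]
  rw [e]
  have c1 : Continuous fun p : (E3 × E3) × (E3 × E3) => crossE3 p.1.1 p.2.1 i :=
    ((cont_ev i).comp cont_cross).comp
      ((continuous_fst.comp continuous_fst).prodMk (continuous_fst.comp continuous_snd))
  have c2 : Continuous fun p : (E3 × E3) × (E3 × E3) => crossE3 p.1.2 p.2.2 i :=
    ((cont_ev i).comp cont_cross).comp
      ((continuous_snd.comp continuous_fst).prodMk (continuous_snd.comp continuous_snd))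
  have c3 : Continuous fun p : (E3 × E3) × (E3 × E3) =>
      crossE3 (crossE3 p.1.1 p.1.2) (crossE3 p.2.1 p.2.2) i :=
    ((cont_ev i).comp cont_cross).comp
      ((cont_cross.comp continuous_fst).prodMk (cont_cross.comp continuous_snd))
  exact (c1.add c2).add c3

lemma cont_rho : ContinuousOn (fun p : (E3 × E3) × (E3 × E3) => rho p.1 p.2)
    {p | 0 < Tf p.1 p.2} := by
  unfold rho
  have hT : ContinuousOn (fun p : (E3 × E3) × (E3 × E3) => (2 * Real.sqrt (1 + Tf p.1 p.2))⁻¹)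
      {p | 0 < Tf p.1 p.2} := by
    apply ContinuousOn.inv₀
    · exact (continuous_const.mul ((Real.continuous_sqrt).comp
        (continuous_const.add cont_Tf))).continuousOn
    · intro p hp
      have : 0 < Real.sqrt (1 + Tf p.1 p.2) := Real.sqrt_pos.mpr (by simpa using by linarith [hp.out])
      positivity
  exact hT.smul (continuous_mkQ (continuous_const.add cont_Tf)
    (cont_Af 0) (cont_Af 1) (cont_Af 2)).continuousOn


/-! ### The single loop and its quaternionic lift -/

lemma deriv_singleLoop (s : ℝ) :
    deriv singleLoop s = mkE3 (-sin s) (cos s) 0 := by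
  refine HasDerivAt.deriv ?_
  have hg : HasDerivAt (fun θ => (![Real.cos θ, Real.sin θ, 0] : Fin 3 → ℝ))
      (![-Real.sin s, Real.cos s, 0]) s := by
    rw [hasDerivAt_pi]
    intro i
    fin_cases i
    · simpa using Real.hasDerivAt_cos s
    · simpa using Real.hasDerivAt_sin s
    · simpa using (hasDerivAt_const s (0:ℝ))
  exact ((PiLp.continuousLinearEquiv 2 ℝ (fun _ : Fin 3 => ℝ)).symm.toContinuousLinearMap.hasFDerivAt.comp_hasDerivAt s hg :)

lemma tangentLift_single (s : ℝ) :
    tangentLift singleLoop s = (mkE3 (cos s) (sin s) 0, mkE3 (-sin s) (cos s) 0) := by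
  have hd := deriv_singleLoop s
  have hn : ‖deriv singleLoop s‖ = 1 := by
    rw [hd, norm_eq_one_iff]
    simp only [mkE3_0, mkE3_1, mkE3_2]
    nlinarith [sin_sq_add_cos_sq s]
  unfold tangentLift
  rw [hn, hd]
  refine Prod.ext rfl ?_
  norm_num

def qkf (s : ℝ) : ℍ := mkQ (cos (s/2)) 0 0 (sin (s/2))

lemma qkf_norm (s : ℝ) : ‖qkf s‖ = 1 := by
  apply norm_eq_one_of_normSq
  simp only [qkf, mkQ_re, mkQ_imI, mkQ_imJ, mkQ_imK]
  nlinarith [sin_sq_add_cos_sq (s/2)]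

lemma Pmap_qkf (s : ℝ) : Pmap (qkf s) = tangentLift singleLoop s := by
  have hc : cos s = cos (s/2)^2 - sin (s/2)^2 := by
    have h := Real.cos_two_mul (s/2)
    rw [show 2*(s/2) = s by ring] at h
    rw [h]
    linear_combination Real.sin_sq_add_cos_sq (s/2)
  have hs : sin s = 2 * sin (s/2) * cos (s/2) := by
    have h := Real.sin_two_mul (s/2)
    rw [show 2*(s/2) = s by ring] at h
    exact h
  rw [tangentLift_single, hc, hs]
  unfold Pmap
  rw [rotVec_coord, rotVec_coord]
  refine Prod.ext ?_ ?_ <;> apply E3_ext <;>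
    simp only [qkf, mkQ_re, mkQ_imI, mkQ_imJ, mkQ_imK, qe1, qe2, mkE3_0, mkE3_1, mkE3_2] <;>
    ring

lemma qkf_re_mul (s s' : ℝ) : (qkf s' * star (qkf s)).re = cos ((s' - s)/2) := by
  simp only [qkf, Quaternion.re_mul, Quaternion.re_star, Quaternion.imI_star,
    Quaternion.imJ_star, Quaternion.imK_star, mkQ_re, mkQ_imI, mkQ_imJ, mkQ_imK]
  rw [show (s'-s)/2 = s'/2 - s/2 by ring, Real.cos_sub]
  ring

lemma qkf_zero : qkf 0 = 1 := by
  apply Q_ext <;> simp [qkf]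

lemma qkf_twopi : qkf (2*π) = -1 := by
  apply Q_ext <;> simp [qkf]

lemma qkf_mul_cancel {s s' : ℝ} : qkf s' * star (qkf s) * qkf s = qkf s' := by
  rw [mul_assoc, star_mul_self]
  have : normSq (qkf s) = 1 := by
    rw [normSq_eq_norm_mul_self, qkf_norm]; norm_num
  rw [this]
  norm_num


/-! ### Monodromy: no null-homotopy of the single loop -/

lemma rotVec_star_self {β : ℍ} (hβ : ‖β‖ = 1) (y : E3) :
    rotVec (star β) (rotVec β y) = y := by
  have h1 : normSq β = 1 := by rw [normSq_eq_norm_mul_self, hβ]; norm_num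
  rw [← rotVec_mul, star_mul_self, h1]
  norm_num
  exact rotVec_one y

def vp (g : ℝ → ℝ → E3 × E3) (n : ℕ) : ℕ → ℝ → ℍ
  | 0, _ => 1
  | k+1, t => rho (g ((k : ℝ) * t / n) 0) (g (((k : ℝ)+1) * t / n) 0) * vp g n k t

def hp (g : ℝ → ℝ → E3 × E3) (n : ℕ) : ℕ → ℝ → ℝ → ℍ
  | 0, t, _ => vp g n n t
  | k+1, t, s => rho (g t ((k : ℝ) * s / n)) (g t (((k : ℝ)+1) * s / n)) * hp g n k t s

lemma rho_comp_contOn {f1 f2 : ℝ → E3 × E3} {S : Set ℝ}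
    (h1 : Continuous f1) (h2 : Continuous f2) (hpos : ∀ t ∈ S, 0 < Tf (f1 t) (f2 t)) :
    ContinuousOn (fun t => rho (f1 t) (f2 t)) S := by
  have he : (fun t => rho (f1 t) (f2 t)) =
      (fun p : (E3×E3)×(E3×E3) => rho p.1 p.2) ∘ (fun t => (f1 t, f2 t)) := rfl
  rw [he]
  exact cont_rho.comp (h1.prodMk h2).continuousOn hpos

lemma no_nullhomotopy (g : ℝ → ℝ → E3 × E3)
    (hmem : ∀ t s, g t s ∈ unitTangentS2)
    (hcont : Continuous fun p : ℝ × ℝ => g p.1 p.2)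
    (hper : ∀ t s, g t (s + 2*π) = g t s)
    (h0 : ∀ s, g 0 s = tangentLift singleLoop s)
    (h1 : ∃ A, ∀ s, g 1 s = A) : False := by
  obtain ⟨A, hA⟩ := h1
  have hπ : 0 < π := Real.pi_pos
  set K : Set (ℝ × ℝ) := Set.Icc 0 1 ×ˢ Set.Icc 0 (2*π) with hK
  have hUC : UniformContinuousOn (fun p : ℝ × ℝ => g p.1 p.2) K :=
    (isCompact_Icc.prod isCompact_Icc).uniformContinuousOn_of_continuous hcont.continuousOn
  rw [Metric.uniformContinuousOn_iff] at hUC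
  obtain ⟨δ, hδpos, hδ⟩ := hUC (1/2) (by norm_num)
  obtain ⟨n, hn⟩ := exists_nat_gt ((2*π + 1)/δ + 3)
  have hd0 : 0 < (2*π+1)/δ := div_pos (by linarith) hδpos
  have hn3 : 3 < (n:ℝ) := by linarith
  have hn0 : (0:ℝ) < n := by linarith
  have hnne : (n:ℝ) ≠ 0 := ne_of_gt hn0
  have hprod : 2*π+1 < δ * n := by
    have h2 : (2*π+1)/δ < n := by linarith
    rw [div_lt_iff₀ hδpos] at h2
    linarith
  have h1nδ : 1/(n:ℝ) < δ := by rw [div_lt_iff₀ hn0]; nlinarith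
  have h2πnδ : 2*π/(n:ℝ) < δ := by rw [div_lt_iff₀ hn0]; nlinarith
  have hg00 : g 0 0 = Pmap 1 := by
    rw [h0 0, ← Pmap_qkf 0, qkf_zero]
  -- closeness criterion
  have key : ∀ p q : ℝ × ℝ, p ∈ K → q ∈ K → dist p q < δ →
      0 < Tf (g p.1 p.2) (g q.1 q.2) := by
    intro p q hp hq hd
    have hlt := hδ p hp q hq hd
    apply Tf_pos_of_close (hmem _ _) (hmem _ _)
    · have hle : dist (g p.1 p.2).1 (g q.1 q.2).1 ≤ dist (g p.1 p.2) (g q.1 q.2) := by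
        rw [Prod.dist_eq]; exact le_max_left _ _
      rw [dist_eq_norm] at hle
      linarith
    · have hle : dist (g p.1 p.2).2 (g q.1 q.2).2 ≤ dist (g p.1 p.2) (g q.1 q.2) := by
        rw [Prod.dist_eq]; exact le_max_right _ _
      rw [dist_eq_norm] at hle
      linarith
  -- membership of vertical grid points
  have memV : ∀ (k : ℕ), k ≤ n → ∀ t ∈ Set.Icc (0:ℝ) 1, ((k:ℝ)*t/n, (0:ℝ)) ∈ K := by
    intro k hk t ht
    obtain ⟨ht0, ht1⟩ := ht
    have hkn : (k:ℝ) ≤ n := Nat.cast_le.mpr hk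
    refine Set.mem_prod.mpr ⟨Set.mem_Icc.mpr ⟨by positivity, ?_⟩,
      Set.mem_Icc.mpr ⟨le_refl 0, by positivity⟩⟩
    rw [div_le_one hn0]
    nlinarith
  have distV : ∀ (k : ℕ), ∀ t ∈ Set.Icc (0:ℝ) 1,
      dist ((k:ℝ)*t/n, (0:ℝ)) (((k:ℝ)+1)*t/n, (0:ℝ)) < δ := by
    intro k t ht
    obtain ⟨ht0, ht1⟩ := ht
    rw [Prod.dist_eq]
    simp only [dist_self]
    rw [max_eq_left dist_nonneg, Real.dist_eq,
      show (k:ℝ)*t/n - ((k:ℝ)+1)*t/n = -(t/n) by ring, abs_neg,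
      abs_of_nonneg (by positivity)]
    calc t/(n:ℝ) ≤ 1/n := by gcongr
        _ < δ := h1nδ
  -- membership of horizontal grid points
  have memH : ∀ (k : ℕ), k ≤ n → ∀ t ∈ Set.Icc (0:ℝ) 1, ∀ s ∈ Set.Icc (0:ℝ) (2*π),
      (t, (k:ℝ)*s/n) ∈ K := by
    intro k hk t ht s hs
    obtain ⟨hs0, hs1⟩ := hs
    have hkn : (k:ℝ) ≤ n := Nat.cast_le.mpr hk
    refine Set.mem_prod.mpr ⟨ht, Set.mem_Icc.mpr ⟨by positivity, ?_⟩⟩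
    rw [div_le_iff₀ hn0]
    nlinarith
  have distH : ∀ (k : ℕ), ∀ s ∈ Set.Icc (0:ℝ) (2*π), ∀ t : ℝ,
      dist (t, (k:ℝ)*s/n) (t, ((k:ℝ)+1)*s/n) < δ := by
    intro k s hs t
    obtain ⟨hs0, hs1⟩ := hs
    rw [Prod.dist_eq]
    simp only [dist_self]
    rw [max_eq_right dist_nonneg, Real.dist_eq,
      show (k:ℝ)*s/n - ((k:ℝ)+1)*s/n = -(s/n) by ring, abs_neg,
      abs_of_nonneg (by positivity)]
    calc s/(n:ℝ) ≤ 2*π/n := by gcongr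
      _ < δ := h2πnδ
  -- the lift along the vertical segment
  have vp_spec : ∀ k : ℕ, k ≤ n → ∀ t ∈ Set.Icc (0:ℝ) 1,
      ‖vp g n k t‖ = 1 ∧
      rotVec (vp g n k t) qe1 = (g ((k:ℝ)*t/n) 0).1 ∧
      rotVec (vp g n k t) qe2 = (g ((k:ℝ)*t/n) 0).2 := by
    intro k
    induction k with
    | zero =>
      intro _ t ht
      refine ⟨norm_one, ?_, ?_⟩ <;>
        simp only [vp, Nat.cast_zero, zero_mul, zero_div, rotVec_one, hg00] <;>
        exact (rotVec_one _).symm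
    | succ k ih =>
      intro hk t ht
      obtain ⟨ihn, ih1, ih2⟩ := ih (Nat.le_of_succ_le hk) t ht
      have hTpos : 0 < Tf (g ((k:ℝ)*t/n) 0) (g (((k:ℝ)+1)*t/n) 0) := by
        have := key ((k:ℝ)*t/n, 0) (((k:ℝ)+1)*t/n, 0)
          (memV k (Nat.le_of_succ_le hk) t ht)
          (by rw [show ((k:ℝ)+1) = ((k+1 : ℕ) : ℝ) by push_cast; ring]; exact memV (k+1) hk t ht)
          (distV k t ht)
        exact this
      obtain ⟨hρn, hρ1, hρ2⟩ := rho_spec (hmem _ _) (hmem _ _) hTpos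
      refine ⟨?_, ?_, ?_⟩
      · show ‖rho _ _ * vp g n k t‖ = 1
        rw [norm_mul, hρn, ihn, mul_one]
      · show rotVec (rho _ _ * vp g n k t) qe1 = _
        rw [rotVec_mul, ih1, hρ1]
        norm_cast
      · show rotVec (rho _ _ * vp g n k t) qe2 = _
        rw [rotVec_mul, ih2, hρ2]
        norm_cast
  -- the lift along the horizontal segment
  have hp_spec : ∀ k : ℕ, k ≤ n → ∀ t ∈ Set.Icc (0:ℝ) 1, ∀ s ∈ Set.Icc (0:ℝ) (2*π),
      ‖hp g n k t s‖ = 1 ∧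
      rotVec (hp g n k t s) qe1 = (g t ((k:ℝ)*s/n)).1 ∧
      rotVec (hp g n k t s) qe2 = (g t ((k:ℝ)*s/n)).2 := by
    intro k
    induction k with
    | zero =>
      intro _ t ht s hs
      obtain ⟨hvn, hv1, hv2⟩ := vp_spec n le_rfl t ht
      have he : (n:ℝ)*t/n = t := by field_simp
      rw [he] at hv1 hv2
      refine ⟨hvn, ?_, ?_⟩ <;>
        simp only [hp, Nat.cast_zero, zero_mul, zero_div] <;> assumption
    | succ k ih =>
      intro hk t ht s hs
      obtain ⟨ihn, ih1, ih2⟩ := ih (Nat.le_of_succ_le hk) t ht s hs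
      have hTpos : 0 < Tf (g t ((k:ℝ)*s/n)) (g t (((k:ℝ)+1)*s/n)) := by
        have := key (t, (k:ℝ)*s/n) (t, ((k:ℝ)+1)*s/n)
          (memH k (Nat.le_of_succ_le hk) t ht s hs)
          (by rw [show ((k:ℝ)+1) = ((k+1 : ℕ) : ℝ) by push_cast; ring]; exact memH (k+1) hk t ht s hs)
          (distH k s hs t)
        exact this
      obtain ⟨hρn, hρ1, hρ2⟩ := rho_spec (hmem _ _) (hmem _ _) hTpos
      refine ⟨?_, ?_, ?_⟩
      · show ‖rho _ _ * hp g n k t s‖ = 1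
        rw [norm_mul, hρn, ihn, mul_one]
      · show rotVec (rho _ _ * hp g n k t s) qe1 = _
        rw [rotVec_mul, ih1, hρ1]
        norm_cast
      · show rotVec (rho _ _ * hp g n k t s) qe2 = _
        rw [rotVec_mul, ih2, hρ2]
        norm_cast
  -- continuity of the lift
  have vp_cont : ∀ k : ℕ, k ≤ n → ContinuousOn (vp g n k) (Set.Icc (0:ℝ) 1) := by
    intro k
    induction k with
    | zero => intro _; exact continuousOn_const
    | succ k ih =>
      intro hk
      have hkn := Nat.le_of_succ_le hk
      have hfac : ContinuousOn
          (fun t => rho (g ((k:ℝ)*t/n) 0) (g (((k:ℝ)+1)*t/n) 0)) (Set.Icc (0:ℝ) 1) := by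
        have hm1 : Continuous (fun t : ℝ => (((k:ℝ)*t/n, (0:ℝ)) : ℝ × ℝ)) := by fun_prop
        have hm2 : Continuous (fun t : ℝ => ((((k:ℝ)+1)*t/n, (0:ℝ)) : ℝ × ℝ)) := by fun_prop
        have hc1 : Continuous (fun t : ℝ => g ((k:ℝ)*t/n) 0) := hcont.comp hm1
        have hc2 : Continuous (fun t : ℝ => g (((k:ℝ)+1)*t/n) 0) := hcont.comp hm2
        refine rho_comp_contOn hc1 hc2 ?_
        intro t ht
        exact key ((k:ℝ)*t/n, 0) ((((k:ℝ)+1)*t/n, 0)) (memV k hkn t ht)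
          (by rw [show ((k:ℝ)+1) = ((k+1 : ℕ) : ℝ) by push_cast; ring]; exact memV (k+1) hk t ht)
          (distV k t ht)
      show ContinuousOn
        (fun t => rho (g ((k:ℝ)*t/n) 0) (g (((k:ℝ)+1)*t/n) 0) * vp g n k t) (Set.Icc (0:ℝ) 1)
      exact hfac.mul (ih hkn)
  have hpα_cont : ∀ k : ℕ, k ≤ n →
      ContinuousOn (fun t => hp g n k t (2*π)) (Set.Icc (0:ℝ) 1) := by
    intro k
    induction k with
    | zero => intro _; exact vp_cont n le_rfl
    | succ k ih =>
      intro hk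
      have hkn := Nat.le_of_succ_le hk
      have h2πmem : (2*π : ℝ) ∈ Set.Icc (0:ℝ) (2*π) := ⟨by positivity, le_refl _⟩
      have hfac : ContinuousOn
          (fun t => rho (g t ((k:ℝ)*(2*π)/n)) (g t (((k:ℝ)+1)*(2*π)/n))) (Set.Icc (0:ℝ) 1) := by
        have hm1 : Continuous (fun t : ℝ => ((t, (k:ℝ)*(2*π)/n) : ℝ × ℝ)) := by fun_prop
        have hm2 : Continuous (fun t : ℝ => ((t, ((k:ℝ)+1)*(2*π)/n) : ℝ × ℝ)) := by fun_prop
        have hc1 : Continuous (fun t : ℝ => g t ((k:ℝ)*(2*π)/n)) := hcont.comp hm1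
        have hc2 : Continuous (fun t : ℝ => g t (((k:ℝ)+1)*(2*π)/n)) := hcont.comp hm2
        refine rho_comp_contOn hc1 hc2 ?_
        intro t ht
        exact key (t, (k:ℝ)*(2*π)/n) (t, ((k:ℝ)+1)*(2*π)/n) (memH k hkn t ht (2*π) h2πmem)
          (by rw [show ((k:ℝ)+1) = ((k+1 : ℕ) : ℝ) by push_cast; ring]
              exact memH (k+1) hk t ht (2*π) h2πmem)
          (distH k (2*π) h2πmem t)
      show ContinuousOn
        (fun t => rho (g t ((k:ℝ)*(2*π)/n)) (g t (((k:ℝ)+1)*(2*π)/n)) * hp g n k t (2*π))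
        (Set.Icc (0:ℝ) 1)
      exact hfac.mul (ih hkn)
  -- values at t = 0
  have vp_zero : ∀ k : ℕ, vp g n k 0 = 1 := by
    intro k
    induction k with
    | zero => rfl
    | succ k ih =>
      show rho (g ((k:ℝ)*0/n) 0) (g (((k:ℝ)+1)*0/n) 0) * vp g n k 0 = 1
      rw [ih, mul_one, show (k:ℝ)*0/(n:ℝ) = 0 by ring, show ((k:ℝ)+1)*0/(n:ℝ) = 0 by ring]
      exact rho_self (hmem 0 0)
  have hp_zero : ∀ k : ℕ, hp g n k 0 (2*π) = qkf ((k:ℝ)*(2*π)/n) := by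
    intro k
    induction k with
    | zero =>
      show vp g n n 0 = _
      rw [vp_zero n]
      rw [show ((0:ℕ):ℝ)*(2*π)/(n:ℝ) = 0 by push_cast; ring, qkf_zero]
    | succ k ih =>
      show rho (g 0 ((k:ℝ)*(2*π)/n)) (g 0 (((k:ℝ)+1)*(2*π)/n)) * hp g n k 0 (2*π) = _
      rw [ih]
      rw [show g 0 ((k:ℝ)*(2*π)/n) = Pmap (qkf ((k:ℝ)*(2*π)/n)) by rw [h0, Pmap_qkf],
        show g 0 (((k:ℝ)+1)*(2*π)/n) = Pmap (qkf (((k:ℝ)+1)*(2*π)/n)) by rw [h0, Pmap_qkf]]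
      have hrepos : 0 < (qkf (((k:ℝ)+1)*(2*π)/n) * star (qkf ((k:ℝ)*(2*π)/n))).re := by
        rw [qkf_re_mul]
        have he : ((((k:ℝ)+1)*(2*π)/n - (k:ℝ)*(2*π)/n))/2 = π/n := by
          field_simp; ring
        rw [he]
        apply Real.cos_pos_of_mem_Ioo
        constructor
        · have h1 : 0 < π/(n:ℝ) := by positivity
          have h2 : (0:ℝ) < π/2 := by positivity
          linarith
        · rw [div_lt_div_iff₀ hn0 two_pos]
          nlinarith
      rw [rho_Pmap (qkf_norm _) (qkf_norm _) hrepos, qkf_mul_cancel]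
      norm_cast
  -- values at t = 1
  have hAmem : A ∈ unitTangentS2 := by rw [← hA 0]; exact hmem 1 0
  have hp_one : ∀ k : ℕ, hp g n k 1 (2*π) = vp g n n 1 := by
    intro k
    induction k with
    | zero => rfl
    | succ k ih =>
      show rho (g 1 ((k:ℝ)*(2*π)/n)) (g 1 (((k:ℝ)+1)*(2*π)/n)) * hp g n k 1 (2*π) = _
      rw [hA, hA, rho_self hAmem, one_mul, ih]
  -- the monodromy sign
  have h2πmem : (2*π : ℝ) ∈ Set.Icc (0:ℝ) (2*π) := ⟨by positivity, le_refl _⟩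
  have εpm : ∀ t ∈ Set.Icc (0:ℝ) 1,
      star (vp g n n t) * hp g n n t (2*π) = 1 ∨
      star (vp g n n t) * hp g n n t (2*π) = -1 := by
    intro t ht
    obtain ⟨hβn, hβ1, hβ2⟩ := vp_spec n le_rfl t ht
    obtain ⟨hαn, hα1, hα2⟩ := hp_spec n le_rfl t ht (2*π) h2πmem
    have hes : (n:ℝ)*(2*π)/(n:ℝ) = 2*π := by field_simp
    have het : (n:ℝ)*t/(n:ℝ) = t := by field_simp
    have hgt : g t (2*π) = g t 0 := by have := hper t 0; rwa [zero_add] at this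
    rw [het] at hβ1 hβ2
    rw [hes, hgt] at hα1 hα2
    refine fiber ?_ ?_ ?_
    · rw [norm_mul, Quaternion.norm_star, hβn, hαn, mul_one]
    · rw [rotVec_mul, hα1, ← hβ1, rotVec_star_self hβn]
    · rw [rotVec_mul, hα2, ← hβ2, rotVec_star_self hβn]
  have εcont : ContinuousOn
      (fun t => (star (vp g n n t) * hp g n n t (2*π)).re) (Set.Icc (0:ℝ) 1) :=
    Quaternion.continuous_re.comp_continuousOn
      (((vp_cont n le_rfl).star).mul (hpα_cont n le_rfl))
  have hε0 : (star (vp g n n 0) * hp g n n 0 (2*π)).re = -1 := by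
    rw [vp_zero n, hp_zero n, star_one, one_mul,
      show (n:ℝ)*(2*π)/(n:ℝ) = 2*π by field_simp, qkf_twopi]
    simp
  have hε1 : (star (vp g n n 1) * hp g n n 1 (2*π)).re = 1 := by
    rw [hp_one n, star_mul_self]
    have hn1 : normSq (vp g n n 1) = 1 := by
      have h := (vp_spec n le_rfl 1 ⟨zero_le_one, le_refl 1⟩).1
      rw [normSq_eq_norm_mul_self, h]; norm_num
    rw [hn1]
    simp
  have hsub := intermediate_value_Icc (zero_le_one)  εcont
  have h0mem : (0:ℝ) ∈ Set.Icc ((star (vp g n n 0) * hp g n n 0 (2*π)).re)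
      ((star (vp g n n 1) * hp g n n 1 (2*π)).re) := by
    rw [hε0, hε1]; norm_num
  obtain ⟨t, ht, hft⟩ := hsub h0mem
  rcases εpm t ht with h | h <;> simp [h] at hft

end SO3Aux
end Aux

open SO3Aux in
/-- The unit-tangent lift of the doubly covered great circle is a
null-homotopic loop in `SO(3)` (trivial class in `π₁(SO(3)) ≅ ℤ/2`), whereas
the lift of the simply covered great circle is not null-homotopic
(nontrivial class). -/
theorem doubleLoop_trivial_singleLoop_nontrivial
    (Θ : unitTangentS2 ≃ₜ SO3)
    (hmemD : ∀ s, tangentLift doubleLoop s ∈ unitTangentS2)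
    (hmemS : ∀ s, tangentLift singleLoop s ∈ unitTangentS2) :
    (∃ G : ℝ → ℝ → SO3,
      (Continuous fun p : ℝ × ℝ => G p.1 p.2) ∧
      (∀ t, Function.Periodic (G t) (2 * π)) ∧
      (∀ s, G 0 s = Θ ⟨tangentLift doubleLoop s, hmemD s⟩) ∧
      (∃ A : SO3, ∀ s, G 1 s = A)) ∧
    ¬ (∃ G : ℝ → ℝ → SO3,
      (Continuous fun p : ℝ × ℝ => G p.1 p.2) ∧
      (∀ t, Function.Periodic (G t) (2 * π)) ∧
      (∀ s, G 0 s = Θ ⟨tangentLift singleLoop s, hmemS s⟩) ∧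
      (∃ A : SO3, ∀ s, G 1 s = A)) := by
  constructor
  · refine ⟨fun t s => Θ ⟨(Hx t s, Hv t s), H_mem t s⟩, ?_, ?_, ?_, ?_⟩
    · exact Θ.continuous.comp (H_continuous.subtype_mk _)
    · intro t s
      exact congrArg Θ (Subtype.ext (H_periodic t s))
    · intro s
      exact congrArg Θ (Subtype.ext (H_zero s))
    · refine ⟨Θ ⟨(mkE3 1 0 0, mkE3 0 (-1) 0), H_one 0 ▸ H_mem 1 0⟩, fun s => ?_⟩
      exact congrArg Θ (Subtype.ext (H_one s))
  · rintro ⟨G, hGc, hGp, hG0, A, hG1⟩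
    apply no_nullhomotopy (fun t s => ((Θ.symm (G t s) : unitTangentS2) : E3 × E3))
    · intro t s
      exact (Θ.symm (G t s)).2
    · exact continuous_subtype_val.comp (Θ.symm.continuous.comp hGc)
    · intro t s
      simp only [hGp t s]
    · intro s
      rw [hG0 s, Homeomorph.symm_apply_apply]
    · exact ⟨(Θ.symm A : E3 × E3), fun s => by rw [hG1 s]⟩
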